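/- Let d ≥ 1 be an integer, k ∈ {0,…,d−1}, z ≥ 1 a real number, and ε ∈ (0, 1/(2^{z+1}+2)]. Let (P,w) be a weighted set of n ≥ 1 points in ℝ^d with Σ_{q∈P} w(q) > 0, set ψ = (ε/z)^z and r = 1 + max_{q∈P} D_z(q, 0_d)/(ψ·ε²), and write c₁ = 2^z + 1. Let Q₀ denote the set of nonempty affine k-subspaces S of ℝ^d with D_z(0_d, S) ≥ ε·r. Then for every p ∈ P, ((1−c₁ε)/(1+c₁ε))·w(p)/Σ_{q∈P} w(q) ≤ sup_{S∈Q₀} [ w(p)·D_z(p,S) / Σ_{q∈P} w(q)·D_z(q,S) ] ≤ ((1+c₁ε)/(1−c₁ε))·w(p)/Σ_{q∈P} w(q), where the supremum is taken over those S ∈ Q₀ with Σ_{q∈P} w(q)·D_z(q,S) > 0. -/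

import Mathlib

set_option maxHeartbeats 1000000 in
/-- Let `(P,w)` be a weighted set of `n ≥ 1` points in `ℝ^d` with
positive total weight, `z ≥ 1`, `ε ∈ (0, 1/(2^{z+1}+2)]`, `ψ = (ε/z)^z`,
`r = 1 + max_{q∈P} dist(q,0)^z/(ψε²)`, `c₁ = 2^z+1`, and let `Q₀` be the set of nonempty
affine `k`-subspaces `S` of `ℝ^d` with `D_z(0,S) ≥ εr`. Then for every `p ∈ P` the
supremum over `S ∈ Q₀` (with nonzero weighted cost) of
`w(p)·D_z(p,S)/Σ_{q∈P} w(q)·D_z(q,S)` lies between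
`((1−c₁ε)/(1+c₁ε))·w(p)/Σ_{q∈P} w(q)` and `((1+c₁ε)/(1−c₁ε))·w(p)/Σ_{q∈P} w(q)`. -/
theorem stmt11 (d k n : ℕ) (hd : 1 ≤ d) (hk : k ≤ d - 1) (hn : 1 ≤ n)
    (z ε : ℝ) (hz : 1 ≤ z) (hε : ε ∈ Set.Ioc (0 : ℝ) (1 / (2 ^ (z + 1) + 2)))
    (P : Finset (EuclideanSpace ℝ (Fin d))) (hP : P.Nonempty) (hcard : P.card = n)
    (w : EuclideanSpace ℝ (Fin d) → ℝ) (hw : ∀ q ∈ P, 0 ≤ w q)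
    (hwpos : 0 < ∑ q ∈ P, w q)
    (ψ r c₁ : ℝ) (hψ : ψ = (ε / z) ^ z)
    (hr : r = 1 + P.sup' hP fun q => dist q 0 ^ z / (ψ * ε ^ 2))
    (hc₁ : c₁ = 2 ^ z + 1)
    (p : EuclideanSpace ℝ (Fin d)) (hp : p ∈ P) :
    (1 - c₁ * ε) / (1 + c₁ * ε) * (w p / ∑ q ∈ P, w q) ≤
      sSup {t : ℝ | ∃ S : AffineSubspace ℝ (EuclideanSpace ℝ (Fin d)),
        (S : Set (EuclideanSpace ℝ (Fin d))).Nonempty ∧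
        Module.finrank ℝ S.direction = k ∧
        ε * r ≤ Metric.infDist 0 (S : Set (EuclideanSpace ℝ (Fin d))) ^ z ∧
        0 < (∑ q ∈ P, w q * Metric.infDist q (S : Set (EuclideanSpace ℝ (Fin d))) ^ z) ∧
        t = w p * Metric.infDist p (S : Set (EuclideanSpace ℝ (Fin d))) ^ z /
            ∑ q ∈ P, w q * Metric.infDist q (S : Set (EuclideanSpace ℝ (Fin d))) ^ z} ∧
    sSup {t : ℝ | ∃ S : AffineSubspace ℝ (EuclideanSpace ℝ (Fin d)),
        (S : Set (EuclideanSpace ℝ (Fin d))).Nonempty ∧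
        Module.finrank ℝ S.direction = k ∧
        ε * r ≤ Metric.infDist 0 (S : Set (EuclideanSpace ℝ (Fin d))) ^ z ∧
        0 < (∑ q ∈ P, w q * Metric.infDist q (S : Set (EuclideanSpace ℝ (Fin d))) ^ z) ∧
        t = w p * Metric.infDist p (S : Set (EuclideanSpace ℝ (Fin d))) ^ z /
            ∑ q ∈ P, w q * Metric.infDist q (S : Set (EuclideanSpace ℝ (Fin d))) ^ z} ≤
      (1 + c₁ * ε) / (1 - c₁ * ε) * (w p / ∑ q ∈ P, w q) := by
  classical
  obtain ⟨hε0, hε1⟩ := hε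
  have hz0 : (0:ℝ) < z := lt_of_lt_of_le one_pos hz
  have h2z : (2:ℝ) ≤ 2 ^ z := by
    have := Real.rpow_le_rpow_of_exponent_le (x := 2) one_le_two hz
    rwa [Real.rpow_one] at this
  have hc₁3 : (3:ℝ) ≤ c₁ := by rw [hc₁]; linarith
  have h2c : (2:ℝ) ^ (z+1) + 2 = 2 * c₁ := by
    rw [hc₁, Real.rpow_add two_pos, Real.rpow_one]; ring
  have hc₁ε : c₁ * ε ≤ 1/2 := by
    rw [h2c] at hε1
    have h2c₁ : (0:ℝ) < 2 * c₁ := by linarith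
    rw [le_div_iff₀ h2c₁] at hε1
    nlinarith
  have hεhalf : ε ≤ 1/2 := by nlinarith
  have h1mc : (0:ℝ) < 1 - c₁ * ε := by linarith
  have h1pc : (0:ℝ) < 1 + c₁ * ε := by nlinarith
  have hψ0 : 0 < ψ := by rw [hψ]; exact Real.rpow_pos_of_pos (div_pos hε0 hz0) _
  have hψ1 : ψ ≤ 1 := by
    rw [hψ]
    exact Real.rpow_le_one (le_of_lt (div_pos hε0 hz0))
      ((div_le_one hz0).mpr (by linarith)) hz0.le
  have hr1 : 1 ≤ r := by
    have h0 : (0:ℝ) ≤ dist p 0 ^ z / (ψ * ε ^ 2) :=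
      div_nonneg (Real.rpow_nonneg dist_nonneg _) (by positivity)
    have := Finset.le_sup' (fun q => dist q 0 ^ z / (ψ * ε ^ 2)) hp
    rw [hr]; linarith
  have hεr : 0 < ε * r := mul_pos hε0 (by linarith)
  have hM : ∀ q ∈ P, dist q 0 ^ z ≤ ψ * ε ^ 2 * (r - 1) := by
    intro q hq
    have := Finset.le_sup' (fun q => dist q 0 ^ z / (ψ * ε ^ 2)) hq
    have h' : dist q 0 ^ z / (ψ * ε ^ 2) ≤ r - 1 := by rw [hr]; linarith
    have hpos : (0:ℝ) < ψ * ε ^ 2 := by positivity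
    calc dist q 0 ^ z = dist q 0 ^ z / (ψ * ε ^ 2) * (ψ * ε ^ 2) := by field_simp
      _ ≤ (r - 1) * (ψ * ε ^ 2) := by
          exact mul_le_mul_of_nonneg_right h' hpos.le
      _ = ψ * ε ^ 2 * (r - 1) := by ring
  -- pointwise bound
  have point : ∀ S : AffineSubspace ℝ (EuclideanSpace ℝ (Fin d)),
      ε * r ≤ Metric.infDist 0 (S : Set (EuclideanSpace ℝ (Fin d))) ^ z →
      ∀ q ∈ P,
        Metric.infDist 0 (S : Set (EuclideanSpace ℝ (Fin d))) ^ z * (1 - c₁ * ε)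
          ≤ Metric.infDist q (S : Set (EuclideanSpace ℝ (Fin d))) ^ z ∧
        Metric.infDist q (S : Set (EuclideanSpace ℝ (Fin d))) ^ z
          ≤ Metric.infDist 0 (S : Set (EuclideanSpace ℝ (Fin d))) ^ z * (1 + c₁ * ε) := by
    intro S hSfar q hq
    set ℓ := Metric.infDist 0 (S : Set (EuclideanSpace ℝ (Fin d))) with hℓdef
    have hℓ0 : 0 ≤ ℓ := Metric.infDist_nonneg
    have hL : 0 < ℓ ^ z := lt_of_lt_of_le hεr hSfar
    have hℓpos : 0 < ℓ := by
      rcases hℓ0.lt_or_eq with h | h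
      · exact h
      · exfalso; rw [← h, Real.zero_rpow hz0.ne'] at hL; exact lt_irrefl 0 hL
    have hq0 : dist q 0 ^ z ≤ ψ * ε * ℓ ^ z := by
      have h1 := hM q hq
      have h2 : ψ * ε ^ 2 * (r - 1) ≤ ψ * ε * (ε * r) := by nlinarith
      have h3 : ψ * ε * (ε * r) ≤ ψ * ε * ℓ ^ z :=
        mul_le_mul_of_nonneg_left hSfar (by positivity)
      linarith
    set t := dist q 0 / ℓ with htdef
    have ht0 : 0 ≤ t := div_nonneg dist_nonneg hℓ0
    have htz : t ^ z ≤ ψ := by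
      have h1 : t ^ z = dist q 0 ^ z / ℓ ^ z := Real.div_rpow dist_nonneg hℓ0 z
      have h2 : dist q 0 ^ z / ℓ ^ z ≤ ψ * ε := by
        rw [div_le_iff₀ hL]
        calc dist q 0 ^ z ≤ ψ * ε * ℓ ^ z := hq0
          _ = ψ * ε * ℓ ^ z := rfl
      have h3 : ψ * ε ≤ ψ := by nlinarith
      linarith
    have ht : t ≤ ε / z := by
      have := (Real.rpow_le_rpow_iff ht0 (div_nonneg hε0.le hz0.le) hz0).mp
        (by rw [← hψ] at *; exact le_trans htz (le_of_eq hψ))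
      exact this
    have hzt : z * t ≤ ε := by
      have := mul_le_mul_of_nonneg_left ht hz0.le
      rwa [mul_div_cancel₀ _ hz0.ne'] at this
    have htε : t ≤ ε := le_trans ht (div_le_self hε0.le hz)
    have ht1 : t < 1 := lt_of_le_of_lt htε (by linarith)
    have hdq : dist q 0 = ℓ * t := by
      rw [htdef, mul_div_cancel₀]; exact hℓpos.ne'
    constructor
    · -- lower bound
      have h1 : ℓ * (1 - t) ≤ Metric.infDist q (S : Set (EuclideanSpace ℝ (Fin d))) := by
        have := Metric.infDist_le_infDist_add_dist
          (x := (0 : EuclideanSpace ℝ (Fin d))) (y := q)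
          (s := (S : Set (EuclideanSpace ℝ (Fin d))))
        rw [dist_comm] at this
        rw [mul_sub, mul_one, ← hdq]
        linarith [this]
      have h2 : (ℓ * (1 - t)) ^ z ≤
          Metric.infDist q (S : Set (EuclideanSpace ℝ (Fin d))) ^ z :=
        Real.rpow_le_rpow (mul_nonneg hℓ0 (by linarith)) h1 hz0.le
      have h3 : (ℓ * (1 - t)) ^ z = ℓ ^ z * (1 - t) ^ z :=
        Real.mul_rpow hℓ0 (by linarith)
      have h4 : 1 - z * t ≤ (1 - t) ^ z := by
        have h := one_add_mul_self_le_rpow_one_add (s := -t) (by linarith) hz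
        rw [show (1:ℝ) + -t = 1 - t from by ring, show (1:ℝ) + z * -t = 1 - z * t from by ring]
          at h
        exact h
      have hεc : ε ≤ c₁ * ε := le_mul_of_one_le_left hε0.le (by linarith)
      have h5 : 1 - c₁ * ε ≤ (1 - t) ^ z := by linarith
      calc ℓ ^ z * (1 - c₁ * ε) ≤ ℓ ^ z * (1 - t) ^ z :=
            mul_le_mul_of_nonneg_left h5 hL.le
        _ = (ℓ * (1 - t)) ^ z := h3.symm
        _ ≤ _ := h2
    · -- upper bound
      have h1 : Metric.infDist q (S : Set (EuclideanSpace ℝ (Fin d))) ≤ ℓ * (1 + t) := by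
        have := Metric.infDist_le_infDist_add_dist
          (x := q) (y := (0 : EuclideanSpace ℝ (Fin d)))
          (s := (S : Set (EuclideanSpace ℝ (Fin d))))
        rw [mul_add, mul_one, ← hdq]
        linarith [this]
      have h2 : Metric.infDist q (S : Set (EuclideanSpace ℝ (Fin d))) ^ z
          ≤ (ℓ * (1 + t)) ^ z :=
        Real.rpow_le_rpow Metric.infDist_nonneg h1 hz0.le
      have h3 : (ℓ * (1 + t)) ^ z = ℓ ^ z * (1 + t) ^ z :=
        Real.mul_rpow hℓ0 (by linarith)
      have h4 : (1 + t) ^ z ≤ 1 + (2 ^ z - 1) * t := by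
        have hconv := (convexOn_rpow hz).2 (Set.mem_Ici.mpr (by norm_num : (0:ℝ) ≤ 1))
          (Set.mem_Ici.mpr (by norm_num : (0:ℝ) ≤ 2)) (by linarith : (0:ℝ) ≤ 1 - t) ht0
          (by ring : 1 - t + t = 1)
        simp only [smul_eq_mul] at hconv
        have he : (1 - t) * 1 + t * 2 = 1 + t := by ring
        rw [he] at hconv
        rw [Real.one_rpow] at hconv
        linarith [hconv]
      have h5 : (1 + t) ^ z ≤ 1 + c₁ * ε := by
        have : (2 ^ z - 1) * t ≤ c₁ * ε := by
          have h2z0 : (0:ℝ) ≤ 2 ^ z - 1 := by linarith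
          have : (2 ^ z - 1) * t ≤ (2 ^ z - 1) * ε := mul_le_mul_of_nonneg_left htε h2z0
          nlinarith
        linarith
      calc Metric.infDist q (S : Set (EuclideanSpace ℝ (Fin d))) ^ z ≤ (ℓ * (1 + t)) ^ z := h2
        _ = ℓ ^ z * (1 + t) ^ z := h3
        _ ≤ ℓ ^ z * (1 + c₁ * ε) := mul_le_mul_of_nonneg_left h5 hL.le
  -- sum bounds
  have sums : ∀ S : AffineSubspace ℝ (EuclideanSpace ℝ (Fin d)),
      ε * r ≤ Metric.infDist 0 (S : Set (EuclideanSpace ℝ (Fin d))) ^ z →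
      (∑ q ∈ P, w q) * (Metric.infDist 0 (S : Set (EuclideanSpace ℝ (Fin d))) ^ z * (1 - c₁ * ε))
          ≤ (∑ q ∈ P, w q * Metric.infDist q (S : Set (EuclideanSpace ℝ (Fin d))) ^ z) ∧
      (∑ q ∈ P, w q * Metric.infDist q (S : Set (EuclideanSpace ℝ (Fin d))) ^ z)
          ≤ (∑ q ∈ P, w q) *
            (Metric.infDist 0 (S : Set (EuclideanSpace ℝ (Fin d))) ^ z * (1 + c₁ * ε)) := by
    intro S hf
    constructor
    · rw [Finset.sum_mul]
      exact Finset.sum_le_sum fun q hq =>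
        mul_le_mul_of_nonneg_left (point S hf q hq).1 (hw q hq)
    · rw [Finset.sum_mul]
      exact Finset.sum_le_sum fun q hq =>
        mul_le_mul_of_nonneg_left (point S hf q hq).2 (hw q hq)
  have hLpos : ∀ S : AffineSubspace ℝ (EuclideanSpace ℝ (Fin d)),
      ε * r ≤ Metric.infDist 0 (S : Set (EuclideanSpace ℝ (Fin d))) ^ z →
      0 < Metric.infDist 0 (S : Set (EuclideanSpace ℝ (Fin d))) ^ z :=
    fun _ h => lt_of_lt_of_le hεr h
  have hDpos : ∀ S : AffineSubspace ℝ (EuclideanSpace ℝ (Fin d)),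
      ε * r ≤ Metric.infDist 0 (S : Set (EuclideanSpace ℝ (Fin d))) ^ z →
      0 < ∑ q ∈ P, w q * Metric.infDist q (S : Set (EuclideanSpace ℝ (Fin d))) ^ z :=
    fun S h => lt_of_lt_of_le (mul_pos hwpos (mul_pos (hLpos S h) h1mc)) (sums S h).1
  have ratio_hi : ∀ S : AffineSubspace ℝ (EuclideanSpace ℝ (Fin d)),
      ε * r ≤ Metric.infDist 0 (S : Set (EuclideanSpace ℝ (Fin d))) ^ z →
      w p * Metric.infDist p (S : Set (EuclideanSpace ℝ (Fin d))) ^ z /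
          (∑ q ∈ P, w q * Metric.infDist q (S : Set (EuclideanSpace ℝ (Fin d))) ^ z)
        ≤ (1 + c₁ * ε) / (1 - c₁ * ε) * (w p / ∑ q ∈ P, w q) := by
    intro S hf
    set L := Metric.infDist 0 (S : Set (EuclideanSpace ℝ (Fin d))) ^ z with hLdef
    have hL := hLpos S hf
    have hnum : w p * Metric.infDist p (S : Set (EuclideanSpace ℝ (Fin d))) ^ z
        ≤ w p * (L * (1 + c₁ * ε)) :=
      mul_le_mul_of_nonneg_left (point S hf p hp).2 (hw p hp)
    have hden := (sums S hf).1
    have hden0 : 0 < (∑ q ∈ P, w q) * (L * (1 - c₁ * ε)) :=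
      mul_pos hwpos (mul_pos hL h1mc)
    have hnum0 : 0 ≤ w p * (L * (1 + c₁ * ε)) :=
      mul_nonneg (hw p hp) (mul_nonneg hL.le h1pc.le)
    have hstep := div_le_div₀ hnum0 hnum hden0 hden
    refine le_trans hstep (le_of_eq ?_)
    have e1 : (∑ q ∈ P, w q) ≠ 0 := hwpos.ne'
    have e2 : L ≠ 0 := hL.ne'
    have e3 : (1 - c₁ * ε) ≠ 0 := h1mc.ne'
    field_simp
  have ratio_lo : ∀ S : AffineSubspace ℝ (EuclideanSpace ℝ (Fin d)),
      ε * r ≤ Metric.infDist 0 (S : Set (EuclideanSpace ℝ (Fin d))) ^ z →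
      (1 - c₁ * ε) / (1 + c₁ * ε) * (w p / ∑ q ∈ P, w q)
        ≤ w p * Metric.infDist p (S : Set (EuclideanSpace ℝ (Fin d))) ^ z /
          (∑ q ∈ P, w q * Metric.infDist q (S : Set (EuclideanSpace ℝ (Fin d))) ^ z) := by
    intro S hf
    set L := Metric.infDist 0 (S : Set (EuclideanSpace ℝ (Fin d))) ^ z with hLdef
    have hL := hLpos S hf
    have hnum : w p * (L * (1 - c₁ * ε))
        ≤ w p * Metric.infDist p (S : Set (EuclideanSpace ℝ (Fin d))) ^ z :=
      mul_le_mul_of_nonneg_left (point S hf p hp).1 (hw p hp)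
    have hden := (sums S hf).2
    have hnum0 : 0 ≤ w p * Metric.infDist p (S : Set (EuclideanSpace ℝ (Fin d))) ^ z :=
      mul_nonneg (hw p hp) (Real.rpow_nonneg Metric.infDist_nonneg _)
    have hub0 : 0 < (∑ q ∈ P, w q) * (L * (1 + c₁ * ε)) :=
      mul_pos hwpos (mul_pos hL h1pc)
    have hstep := div_le_div₀ hnum0 hnum (hDpos S hf) hden
    refine le_trans (le_of_eq ?_) hstep
    have e1 : (∑ q ∈ P, w q) ≠ 0 := hwpos.ne'
    have e2 : L ≠ 0 := hL.ne'
    have e3 : (1 + c₁ * ε) ≠ 0 := h1pc.ne'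
    field_simp
    ring
  -- construction of a witness subspace
  have hkd : k < d := by omega
  set j : Fin d := ⟨d - 1, by omega⟩ with hjdef
  set R := max 1 (ε * r) with hRdef
  have hR1 : 1 ≤ R := le_max_left _ _
  have hRεr : ε * r ≤ R := le_max_right _ _
  set f : Fin k → EuclideanSpace ℝ (Fin d) :=
    fun i => EuclideanSpace.single (Fin.castLE hkd.le i) 1 with hfdef
  have hfeq : f = ((EuclideanSpace.basisFun (Fin d) ℝ).toBasis : Fin d → _) ∘
      Fin.castLE hkd.le := by
    funext i
    simp [hfdef]
  have hfli : LinearIndependent ℝ f := by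
    rw [hfeq]
    exact (Module.Basis.linearIndependent _).comp _ (Fin.castLE_injective _)
  set Wsp := Submodule.span ℝ (Set.range f) with hWdef
  have hWrank : Module.finrank ℝ Wsp = k := by
    rw [hWdef, finrank_span_eq_card hfli, Fintype.card_fin]
  set v : EuclideanSpace ℝ (Fin d) := EuclideanSpace.single j R with hvdef
  set S₀ := AffineSubspace.mk' v Wsp with hS₀def
  have hS₀ne : ((S₀ : Set (EuclideanSpace ℝ (Fin d)))).Nonempty :=
    ⟨v, AffineSubspace.self_mem_mk' _ _⟩
  have hdir : Module.finrank ℝ S₀.direction = k := by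
    rw [hS₀def, AffineSubspace.direction_mk']; exact hWrank
  have hWj : ∀ u ∈ Wsp, u j = 0 := by
    intro u hu
    induction hu using Submodule.span_induction with
    | mem x hx =>
      obtain ⟨i, rfl⟩ := hx
      have hne : j ≠ Fin.castLE hkd.le i := by
        intro h
        have : (j : ℕ) = ((Fin.castLE hkd.le i : Fin d) : ℕ) := by rw [h]
        simp [hjdef, Fin.castLE] at this
        omega
      simp [hfdef, EuclideanSpace.single_apply, hne]
    | zero => simp
    | add x y hx hy ihx ihy => simp [ihx, ihy]
    | smul a x hx ihx => simp [ihx]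
  have hxj : ∀ x ∈ S₀, x j = R := by
    intro x hx
    have hmem := AffineSubspace.mem_mk'.mp hx
    have h0 := hWj _ hmem
    have hsub : (x - v) j = 0 := by
      simpa [vsub_eq_sub] using h0
    have hvj : v j = R := by simp [hvdef, EuclideanSpace.single_apply]
    have hs : (x - v) j = x j - v j := rfl
    rw [hs, hvj] at hsub
    linarith
  have hinfR : R ≤ Metric.infDist 0 (S₀ : Set (EuclideanSpace ℝ (Fin d))) := by
    by_contra h
    push_neg at h
    obtain ⟨y, hy, hlt⟩ := (Metric.infDist_lt_iff hS₀ne).mp h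
    have h1 : dist (0 : EuclideanSpace ℝ (Fin d)) y = ‖y‖ := by
      rw [dist_comm, dist_zero_right]
    have h2 : |y j| ≤ ‖y‖ := by
      rw [EuclideanSpace.norm_eq]
      have h3 : ‖y j‖ ^ 2 ≤ ∑ i, ‖y i‖ ^ 2 :=
        Finset.single_le_sum (fun i _ => sq_nonneg (‖y i‖)) (Finset.mem_univ j)
      calc |y j| = Real.sqrt (‖y j‖ ^ 2) := by
            rw [Real.sqrt_sq_eq_abs, Real.norm_eq_abs, abs_abs]
        _ ≤ _ := Real.sqrt_le_sqrt h3
    rw [hxj y hy] at h2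
    rw [h1] at hlt
    have hRabs : |R| = R := abs_of_pos (by linarith)
    linarith
  have hfar₀ : ε * r ≤ Metric.infDist 0 (S₀ : Set (EuclideanSpace ℝ (Fin d))) ^ z := by
    have h1 : 1 ≤ Metric.infDist 0 (S₀ : Set (EuclideanSpace ℝ (Fin d))) :=
      le_trans hR1 hinfR
    have h2 : Metric.infDist 0 (S₀ : Set (EuclideanSpace ℝ (Fin d)))
        ≤ Metric.infDist 0 (S₀ : Set (EuclideanSpace ℝ (Fin d))) ^ z := by
      have := Real.rpow_le_rpow_of_exponent_le h1 hz
      rwa [Real.rpow_one] at this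
    linarith
  -- conclusion
  set T := {t : ℝ | ∃ S : AffineSubspace ℝ (EuclideanSpace ℝ (Fin d)),
        (S : Set (EuclideanSpace ℝ (Fin d))).Nonempty ∧
        Module.finrank ℝ S.direction = k ∧
        ε * r ≤ Metric.infDist 0 (S : Set (EuclideanSpace ℝ (Fin d))) ^ z ∧
        0 < (∑ q ∈ P, w q * Metric.infDist q (S : Set (EuclideanSpace ℝ (Fin d))) ^ z) ∧
        t = w p * Metric.infDist p (S : Set (EuclideanSpace ℝ (Fin d))) ^ z /
            ∑ q ∈ P, w q * Metric.infDist q (S : Set (EuclideanSpace ℝ (Fin d))) ^ z} with hTdef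
  have hmem : (w p * Metric.infDist p (S₀ : Set (EuclideanSpace ℝ (Fin d))) ^ z /
      ∑ q ∈ P, w q * Metric.infDist q (S₀ : Set (EuclideanSpace ℝ (Fin d))) ^ z) ∈ T :=
    ⟨S₀, hS₀ne, hdir, hfar₀, hDpos S₀ hfar₀, rfl⟩
  have hbdd : BddAbove T := by
    refine ⟨(1 + c₁ * ε) / (1 - c₁ * ε) * (w p / ∑ q ∈ P, w q), ?_⟩
    rintro t ⟨S, -, -, hf, -, rfl⟩
    exact ratio_hi S hf
  constructor
  · exact le_trans (ratio_lo S₀ hfar₀) (le_csSup hbdd hmem)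
  · refine Real.sSup_le ?_ ?_
    · rintro t ⟨S, -, -, hf, -, rfl⟩
      exact ratio_hi S hf
    · exact mul_nonneg (div_nonneg h1pc.le h1mc.le)
        (div_nonneg (hw p hp) hwpos.le)
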